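/- Let λ > 0 and let R : ℝ → Matrix (Fin 3) (Fin 3) ℝ be differentiable with R(t) ∈ SO(3) (i.e., R(t)ᵀ R(t) = 1 and det R(t) = 1) for all t, satisfying the error kinematics R'(t) = R(t) · [ω̆(t)]× with the sliding feedback ω̆(t) = −λ · (𝒫(R(t)))∨, where 𝒫(A) = (1/2)(A − Aᵀ) and (·)∨ is the inverse of [·]×. Then V_R(t) = trace(3·1 − R(t)) is differentiable with V_R'(t) = −2λ · ‖(𝒫(R(t)))∨‖² ≤ 0. -/

import Mathlib

noncomputable section

open Matrix

/-- The skew-symmetric matrix `[u]×` with `[u]× w = u × w`. -/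
def skewMat (u : Fin 3 → ℝ) : Matrix (Fin 3) (Fin 3) ℝ :=
  !![0, -u 2, u 1; u 2, 0, -u 0; -u 1, u 0, 0]

/-- The skew-symmetric part `𝒫(A) = (1/2)(A - Aᵀ)` of a matrix. -/
def skewPart (A : Matrix (Fin 3) (Fin 3) ℝ) : Matrix (Fin 3) (Fin 3) ℝ :=
  (1 / 2 : ℝ) • (A - Aᵀ)

/-- The vee map `(·)∨`, inverse of `[·]×`, valued in Euclidean `ℝ³`. -/
def vee (A : Matrix (Fin 3) (Fin 3) ℝ) : EuclideanSpace ℝ (Fin 3) :=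
  WithLp.toLp 2 ![A 2 1, A 0 2, A 1 0]

theorem SO3_sliding_lyapunov_nonincreasing
    (lam : ℝ) (hlam : 0 < lam)
    (R : ℝ → Matrix (Fin 3) (Fin 3) ℝ)
    (hSO : ∀ t : ℝ, (R t)ᵀ * R t = 1 ∧ (R t).det = 1)
    (hdyn : ∀ t : ℝ, ∀ i j, HasDerivAt (fun τ => R τ i j)
      ((R t * skewMat ((-lam) • vee (skewPart (R t)))) i j) t) :
    ∀ t : ℝ,
      HasDerivAt (fun τ => Matrix.trace ((3 : ℝ) • (1 : Matrix (Fin 3) (Fin 3) ℝ) - R τ))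
        (-(2 * lam * ‖vee (skewPart (R t))‖ ^ 2)) t ∧
      -(2 * lam * ‖vee (skewPart (R t))‖ ^ 2) ≤ 0 := by
  intro t
  have hnorm : ‖vee (skewPart (R t))‖ ^ 2 =
      (vee (skewPart (R t)) 0) ^ 2 + (vee (skewPart (R t)) 1) ^ 2 +
      (vee (skewPart (R t)) 2) ^ 2 := by
    rw [EuclideanSpace.norm_eq, Real.sq_sqrt (by positivity)]
    simp [Fin.sum_univ_three, sq_abs]
  set a := R t with ha
  set v := vee (skewPart (R t)) with hv
  set u : EuclideanSpace ℝ (Fin 3) := (-lam) • v with hu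
  set D := R t * skewMat ((-lam) • vee (skewPart (R t))) with hD
  have hu0 : u 0 = -lam * v 0 := rfl
  have hu1 : u 1 = -lam * v 1 := rfl
  have hu2 : u 2 = -lam * v 2 := rfl
  have hv0 : v 0 = (a 2 1 - a 1 2) / 2 := by
    simp [hv, vee, skewPart, Matrix.smul_apply, Matrix.sub_apply, Matrix.transpose_apply, ha]
    ring
  have hv1 : v 1 = (a 0 2 - a 2 0) / 2 := by
    simp [hv, vee, skewPart, Matrix.smul_apply, Matrix.sub_apply, Matrix.transpose_apply, ha]
    ring
  have hv2 : v 2 = (a 1 0 - a 0 1) / 2 := by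
    simp [hv, vee, skewPart, Matrix.smul_apply, Matrix.sub_apply, Matrix.transpose_apply, ha]
    ring
  have hS : ∀ i j, skewMat ((-lam) • vee (skewPart (R t))) i j = !![0, -u 2, u 1; u 2, 0, -u 0; -u 1, u 0, 0] i j :=
    fun i j => rfl
  have hD0 : D 0 0 = a 0 1 * u 2 + a 0 2 * (-u 1) := by
    rw [hD, Matrix.mul_apply, Fin.sum_univ_three, hS, hS, hS]
    simp [← ha]
  have hD1 : D 1 1 = a 1 0 * (-u 2) + a 1 2 * u 0 := by
    rw [hD, Matrix.mul_apply, Fin.sum_univ_three, hS, hS, hS]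
    simp [← ha]
  have hD2 : D 2 2 = a 2 0 * u 1 + a 2 1 * (-u 0) := by
    rw [hD, Matrix.mul_apply, Fin.sum_univ_three, hS, hS, hS]
    simp [← ha]
  have key : -(D 0 0 + D 1 1 + D 2 2) = -(2 * lam * ‖vee (skewPart (R t))‖ ^ 2) := by
    rw [hnorm, hD0, hD1, hD2, hu0, hu1, hu2, hv0, hv1, hv2]
    ring
  constructor
  · have hfun : (fun τ => Matrix.trace ((3 : ℝ) • (1 : Matrix (Fin 3) (Fin 3) ℝ) - R τ))
        = fun τ => 9 - (R τ 0 0 + R τ 1 1 + R τ 2 2) := by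
      funext τ
      simp [Matrix.trace, Matrix.diag, Fin.sum_univ_three, Matrix.sub_apply,
        Matrix.smul_apply, Matrix.one_apply]
      ring
    rw [hfun, ← key]
    have h0 := hdyn t 0 0
    have h1 := hdyn t 1 1
    have h2 := hdyn t 2 2
    exact ((hasDerivAt_const t (9:ℝ)).sub ((h0.add h1).add h2)).congr_deriv (by simp [hD])
  · have h2 : (0:ℝ) ≤ 2 * lam * ‖vee (skewPart (R t))‖ ^ 2 := by positivity
    linarith
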